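/- Let D be a filter on κ, ⟨λ_i : i < κ⟩ a sequence of cardinals, and μ an infinite cardinal. Then D^{[μ]} := {A ⊆ κ : |∏_{i<κ} λ_i / (D + (κ\A))| < μ} is a filter on κ; moreover if μ ≤ |∏_{i<κ} λ_i / D| then D^{[μ]} is a proper filter. -/
import Mathlib


universe u

/-- The cardinality of the reduced product `∏_{i<κ} lams i / E`. -/
noncomputable def redCard {κ : Type u} (E : Filter κ) (lams : κ → Cardinal.{u}) :
    Cardinal.{u + 1} :=
  Cardinal.mk
    (Quot (fun f g : {f : κ → Ordinal.{u} // ∀ i, f i < (lams i).ord} =>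
      {i | f.1 i = g.1 i} ∈ E))

lemma redRel_equiv {κ : Type u} (E : Filter κ) (lams : κ → Cardinal.{u}) :
    Equivalence (fun f g : {f : κ → Ordinal.{u} // ∀ i, f i < (lams i).ord} =>
      {i | f.1 i = g.1 i} ∈ E) := by
  constructor
  · intro f; simp
  · intro f g h; simpa [eq_comm] using h
  · intro f g h h1 h2
    filter_upwards [h1, h2] with i e1 e2
    exact e1.trans e2

lemma redCard_mono {κ : Type u} {E F : Filter κ} (h : E ≤ F) (lams : κ → Cardinal.{u}) :
    redCard E lams ≤ redCard F lams := by
  apply Cardinal.mk_le_of_surjective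
    (f := Quot.lift (fun f => Quot.mk _ f) (fun a b hab => Quot.sound (h hab)))
  intro q
  induction q using Quot.ind with
  | _ f => exact ⟨Quot.mk _ f, rfl⟩

lemma redCard_inter {κ : Type u} (D : Filter κ) (A B : Set κ) (lams : κ → Cardinal.{u}) :
    redCard (D ⊓ Filter.principal (A ∩ B)ᶜ) lams ≤
      redCard (D ⊓ Filter.principal Aᶜ) lams * redCard (D ⊓ Filter.principal Bᶜ) lams := by
  have hA : D ⊓ Filter.principal Aᶜ ≤ D ⊓ Filter.principal (A ∩ B)ᶜ :=
    inf_le_inf_left _ (Filter.principal_mono.2 (Set.compl_subset_compl.2 Set.inter_subset_left))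
  have hB : D ⊓ Filter.principal Bᶜ ≤ D ⊓ Filter.principal (A ∩ B)ᶜ :=
    inf_le_inf_left _ (Filter.principal_mono.2 (Set.compl_subset_compl.2 Set.inter_subset_right))
  rw [show redCard (D ⊓ Filter.principal Aᶜ) lams * redCard (D ⊓ Filter.principal Bᶜ) lams =
      Cardinal.mk (_ × _) from (Cardinal.mul_def _ _)]
  apply Cardinal.mk_le_of_injective
    (f := Quot.lift (fun f => (Quot.mk _ f, Quot.mk _ f))
      (fun a b hab => by
        simp only [Prod.mk.injEq]
        exact ⟨Quot.sound (hA hab), Quot.sound (hB hab)⟩))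
  intro p q
  induction p using Quot.ind with
  | _ f =>
  induction q using Quot.ind with
  | _ g =>
  intro hpq
  simp only [Prod.mk.injEq, Quot.eq] at hpq
  have h1 := ((redRel_equiv (D ⊓ Filter.principal Aᶜ) lams).eqvGen_iff).1 hpq.1
  have h2 := ((redRel_equiv (D ⊓ Filter.principal Bᶜ) lams).eqvGen_iff).1 hpq.2
  apply Quot.sound
  -- {f=g} ∈ D ⊓ 𝓟 (A∩B)ᶜ
  rw [Filter.mem_inf_principal] at h1 h2 ⊢
  filter_upwards [h1, h2] with i e1 e2 hi
  rcases (by simpa [Set.compl_inter] using hi : i ∈ Aᶜ ∨ i ∈ Bᶜ) with h | h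
  · exact e1 h
  · exact e2 h

lemma redCard_bot_le_one {κ : Type u} (lams : κ → Cardinal.{u}) :
    redCard (⊥ : Filter κ) lams ≤ 1 := by
  rw [redCard, Cardinal.le_one_iff_subsingleton]
  constructor
  intro p q
  induction p using Quot.ind with
  | _ f =>
  induction q using Quot.ind with
  | _ g =>
  exact Quot.sound (Filter.mem_bot)

/-- `D^{[μ]} = {A : |∏ lams i / (D + (κ∖A))| < μ}` is a filter on `κ`, and it is a
proper filter if `μ ≤ |∏ lams i / D|`. -/
theorem stmt_15 {κ : Type u} (D : Filter κ) (lams : κ → Cardinal.{u})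
    (μ : Cardinal.{u + 1}) (hμ : Cardinal.aleph0 ≤ μ) :
    (Set.univ ∈ {A : Set κ | redCard (D ⊓ Filter.principal Aᶜ) lams < μ} ∧
      (∀ A B : Set κ, redCard (D ⊓ Filter.principal Aᶜ) lams < μ → A ⊆ B →
        redCard (D ⊓ Filter.principal Bᶜ) lams < μ) ∧
      (∀ A B : Set κ, redCard (D ⊓ Filter.principal Aᶜ) lams < μ →
        redCard (D ⊓ Filter.principal Bᶜ) lams < μ →
        redCard (D ⊓ Filter.principal (A ∩ B)ᶜ) lams < μ)) ∧
    (μ ≤ redCard D lams → ¬ redCard (D ⊓ Filter.principal (∅ : Set κ)ᶜ) lams < μ) := by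
  refine ⟨⟨?_, ?_, ?_⟩, ?_⟩
  · simp only [Set.mem_setOf_eq, Set.compl_univ, Filter.principal_empty, inf_bot_eq]
    exact lt_of_le_of_lt (redCard_bot_le_one lams)
      (lt_of_lt_of_le Cardinal.one_lt_aleph0 hμ)
  · intro A B hA hAB
    refine lt_of_le_of_lt (redCard_mono ?_ lams) hA
    exact inf_le_inf_left _ (Filter.principal_mono.2 (Set.compl_subset_compl.2 hAB))
  · intro A B hA hB
    exact lt_of_le_of_lt (redCard_inter D A B lams) (Cardinal.mul_lt_of_lt hμ hA hB)
  · intro h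
    simpa [Set.compl_empty, Filter.principal_univ, inf_top_eq] using not_lt.2 h
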